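/- In the symmetric slotted-ALOHA game with power-based cost and identical parameters, ∂V_i/∂q_i evaluated at the symmetric point q·1 (all players using probability q ∈ (0,1)) equals -(M/q)·f(q), where f(q) = a·q²·(1-q)^(2N-3) + q - c, a = A/M, c = C/M. -/

import Mathlib

open Finset

noncomputable def gammaT {N : ℕ} (q : Fin N → ℝ) (i : Fin N) : ℝ :=
  q i * ∏ j ∈ univ.erase i, (1 - q j)

noncomputable def altrF {N : ℕ} (q : Fin N → ℝ) (i : Fin N) : ℝ :=
  ∏ j ∈ univ.erase i, (1 - q j)

noncomputable def gammaBar {N : ℕ} (q : Fin N → ℝ) (i : Fin N) : ℝ :=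
  (1 / (N - 1 : ℝ)) * ∑ j ∈ univ.erase i, gammaT q j

noncomputable def Vnet {N : ℕ} (C A M : ℝ) (q : Fin N → ℝ) (i : Fin N) : ℝ :=
  C * Real.log (gammaT q i) + A * altrF q i * gammaBar q i - M * q i

lemma eval_aux {N : ℕ} (hN : 2 ≤ N) (C A M q t : ℝ) (i : Fin N) :
    Vnet C A M (Function.update (fun _ : Fin N => q) i t) i
      = C * Real.log (t * (1 - q) ^ (N - 1))
        + A * (1 - q) ^ (N - 1) * (q * (1 - t) * (1 - q) ^ (N - 2)) - M * t := by
  have hN1 : ((N : ℝ) - 1) ≠ 0 := by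
    have : (2 : ℝ) ≤ (N : ℝ) := by exact_mod_cast hN
    linarith
  have hP : ∏ j ∈ univ.erase i, (1 - Function.update (fun _ : Fin N => q) i t j)
      = (1 - q) ^ (N - 1) := by
    rw [Finset.prod_congr rfl (fun j hj => by
      rw [Function.update_of_ne (Finset.ne_of_mem_erase hj)])]
    rw [Finset.prod_const, Finset.card_erase_of_mem (mem_univ i), Finset.card_univ,
      Fintype.card_fin]
  have hterm : ∀ j ∈ univ.erase i,
      gammaT (Function.update (fun _ : Fin N => q) i t) j
        = q * (1 - t) * (1 - q) ^ (N - 2) := by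
    intro j hj
    have hji : j ≠ i := Finset.ne_of_mem_erase hj
    have hij : i ∈ univ.erase j := Finset.mem_erase.mpr ⟨hji.symm, mem_univ i⟩
    unfold gammaT
    rw [Function.update_of_ne hji]
    rw [← Finset.mul_prod_erase _ _ hij]
    have h2 : ∀ k ∈ (univ.erase j).erase i,
        (1 - Function.update (fun _ : Fin N => q) i t k) = 1 - q := by
      intro k hk
      rw [Function.update_of_ne (Finset.ne_of_mem_erase hk)]
    rw [Finset.prod_congr rfl h2, Finset.prod_const, Function.update_self,
      Finset.card_erase_of_mem hij, Finset.card_erase_of_mem (mem_univ j),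
      Finset.card_univ, Fintype.card_fin]
    have : N - 1 - 1 = N - 2 := by omega
    rw [this]; ring
  have hS : gammaBar (Function.update (fun _ : Fin N => q) i t) i
      = q * (1 - t) * (1 - q) ^ (N - 2) := by
    unfold gammaBar
    rw [Finset.sum_congr rfl hterm, Finset.sum_const,
      Finset.card_erase_of_mem (mem_univ i), Finset.card_univ, Fintype.card_fin,
      nsmul_eq_mul]
    have hcast : ((N - 1 : ℕ) : ℝ) = (N : ℝ) - 1 := by
      have := Nat.one_le_of_lt hN
      push_cast [Nat.cast_sub this]
      ring
    rw [hcast]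
    field_simp
  unfold Vnet gammaT altrF
  rw [hS, Function.update_self, hP]

theorem stmt_13 (N : ℕ) (hN : 2 ≤ N) (C A M : ℝ) (hM : 0 < M)
    (q : ℝ) (hq : q ∈ Set.Ioo (0 : ℝ) 1) (i : Fin N) :
    deriv (fun t => Vnet C A M (Function.update (fun _ : Fin N => q) i t) i) q =
      -(M / q) *
        ((A / M) * q ^ 2 * (1 - q) ^ (2 * N - 3) + q - C / M) := by
  obtain ⟨hq0, hq1⟩ := hq
  set P := (1 - q) ^ (N - 1) with hPdef
  set Q := (1 - q) ^ (N - 2) with hQdef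
  have hPpos : 0 < P := pow_pos (by linarith) _
  have hfun : (fun t => Vnet C A M (Function.update (fun _ : Fin N => q) i t) i)
      = fun t => C * Real.log (t * P) + A * P * (q * (1 - t) * Q) - M * t := by
    funext t; exact eval_aux hN C A M q t i
  rw [hfun]
  have h1 : HasDerivAt (fun t : ℝ => t * P) P q := by
    simpa using (hasDerivAt_id q).mul_const P
  have h2 : HasDerivAt (fun t : ℝ => Real.log (t * P)) (P / (q * P)) q :=
    h1.log (ne_of_gt (mul_pos hq0 hPpos))
  have h3 : HasDerivAt (fun t : ℝ => 1 - t) (-1) q := by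
    simpa using (hasDerivAt_id q).const_sub (1 : ℝ)
  have h4 : HasDerivAt (fun t : ℝ => A * P * (q * (1 - t) * Q))
      (A * P * (q * (-1) * Q)) q := by
    have := ((h3.const_mul q).mul_const Q).const_mul (A * P)
    simpa [mul_assoc] using this
  have h5 : HasDerivAt (fun t : ℝ => M * t) M q := by
    simpa using (hasDerivAt_id q).const_mul M
  have htot : HasDerivAt
      (fun t => C * Real.log (t * P) + A * P * (q * (1 - t) * Q) - M * t)
      (C * (P / (q * P)) + A * P * (q * (-1) * Q) - M) q :=
    ((h2.const_mul C).add h4).sub h5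
  rw [htot.deriv]
  have hPQ : P * Q = (1 - q) ^ (2 * N - 3) := by
    rw [hPdef, hQdef, ← pow_add]
    congr 1
    omega
  have hPne : P ≠ 0 := ne_of_gt hPpos
  have hqne : q ≠ 0 := ne_of_gt hq0
  have hMne : M ≠ 0 := ne_of_gt hM
  have key : P / (q * P) = 1 / q := by field_simp
  rw [key, show A * P * (q * -1 * Q) = -(A * q * (P * Q)) by ring, hPQ]
  field_simp
  ring
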